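/- Let $n > 0$, $\rho > 0$, let $S$, $B$ be symmetric $p \times p$ real matrices, and let $S - \rho B / n$ have eigendecomposition $V D V^T$ with $V$ orthogonal and $D$ diagonal. Define $\tilde D$ to be the diagonal matrix with entries $\tilde D_{jj} = \frac{n}{2\rho}\big(-D_{jj} + \sqrt{D_{jj}^2 + 4\rho/n}\big)$. Then $\Theta^* = V \tilde D V^T$ is positive definite and satisfies the first-order optimality condition $n(\Theta^{*-1} - S) - \rho(\Theta^* - B) = 0$ of the problem: minimize over positive definite $\Theta$ the function $-n(\log\det\Theta - \operatorname{trace}(S\Theta)) + \frac{\rho}{2}\|\Theta - B\|_F^2$. -/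

import Mathlib

open Matrix

lemma posDef_conj {p : ℕ} {A V : Matrix (Fin p) (Fin p) ℝ} (hA : A.PosDef)
    (hV1 : V * Vᵀ = 1) : (V * A * Vᵀ).PosDef := by
  rw [posDef_iff_dotProduct_mulVec]
  constructor
  · show (V * A * Vᵀ)ᴴ = V * A * Vᵀ
    have hAs : Aᴴ = A := hA.isHermitian
    rw [show Aᴴ = Aᵀ from conjTranspose_eq_transpose_of_trivial A] at hAs
    show (V * A * Vᵀ)ᵀ = V * A * Vᵀ
    rw [transpose_mul, transpose_mul, transpose_transpose, hAs, Matrix.mul_assoc]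
  · intro x hx
    have hxV : Vᵀ *ᵥ x ≠ 0 := by
      intro h
      apply hx
      have h2 : (V * Vᵀ) *ᵥ x = V *ᵥ (Vᵀ *ᵥ x) := by rw [mulVec_mulVec]
      rw [h, mulVec_zero, hV1, one_mulVec] at h2
      exact h2
    have key : star x ⬝ᵥ (V * A * Vᵀ) *ᵥ x = star (Vᵀ *ᵥ x) ⬝ᵥ (A *ᵥ (Vᵀ *ᵥ x)) := by
      simp only [star_trivial, ← mulVec_mulVec, dotProduct_mulVec, mulVec_transpose]
    rw [key]
    exact hA.dotProduct_mulVec_pos hxV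

/-- The matrix Theta-update of the ADMM algorithm: the eigenvalue-wise update
produces a positive definite matrix satisfying the first-order optimality
condition. -/
theorem stmt_8 (p : ℕ) (n ρ : ℝ) (hn : 0 < n) (hρ : 0 < ρ)
    (S B V D : Matrix (Fin p) (Fin p) ℝ)
    (hS : S.IsSymm) (hB : B.IsSymm)
    (hV : V * Vᵀ = 1 ∧ Vᵀ * V = 1) (hD : D.IsDiag)
    (hdecomp : S - (ρ / n) • B = V * D * Vᵀ)
    (Θ : Matrix (Fin p) (Fin p) ℝ)
    (hΘ : Θ = V * Matrix.diagonal
      (fun j => n / (2 * ρ) * (-(D j j) + Real.sqrt ((D j j) ^ 2 + 4 * ρ / n))) * Vᵀ) :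
    Θ.PosDef ∧ n • (Θ⁻¹ - S) - ρ • (Θ - B) = 0 := by
  set f : Fin p → ℝ := fun j => n / (2 * ρ) * (-(D j j) + Real.sqrt ((D j j) ^ 2 + 4 * ρ / n))
    with hf
  -- basic scalar facts
  have hs2 : ∀ j, (Real.sqrt ((D j j) ^ 2 + 4 * ρ / n)) ^ 2 = (D j j) ^ 2 + 4 * ρ / n := by
    intro j
    apply Real.sq_sqrt
    positivity
  have hs0 : ∀ j, 0 ≤ Real.sqrt ((D j j) ^ 2 + 4 * ρ / n) := fun j => Real.sqrt_nonneg _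
  have hgt : ∀ j, D j j < Real.sqrt ((D j j) ^ 2 + 4 * ρ / n) := by
    intro j
    set s := Real.sqrt ((D j j) ^ 2 + 4 * ρ / n)
    have h1 := hs2 j
    have h2 := hs0 j
    nlinarith [sq_nonneg (s - D j j), sq_nonneg (s + D j j), div_pos (by linarith : (0:ℝ) < 4 * ρ) hn]
  have hfpos : ∀ j, 0 < f j := by
    intro j
    have := hgt j
    have : 0 < -(D j j) + Real.sqrt ((D j j) ^ 2 + 4 * ρ / n) := by linarith
    exact mul_pos (by positivity) this
  have hfinv : ∀ j, (f j)⁻¹ = (Real.sqrt ((D j j) ^ 2 + 4 * ρ / n) + D j j) / 2 := by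
    intro j
    refine inv_eq_of_mul_eq_one_right ?_
    have h1 := hs2 j
    simp only [hf]
    generalize hs : Real.sqrt ((D j j) ^ 2 + 4 * ρ / n) = s at h1 ⊢
    have h1' : n * s ^ 2 = n * D j j ^ 2 + 4 * ρ := by
      rw [h1]; field_simp
    field_simp
    linear_combination h1'

  have hscalar : ∀ j, n * (f j)⁻¹ - ρ * f j = n * D j j := by
    intro j
    rw [hfinv j]
    simp only [hf]
    generalize Real.sqrt ((D j j) ^ 2 + 4 * ρ / n) = s
    field_simp
    ring
  -- positive definiteness
  have hPD : Θ.PosDef := by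
    rw [hΘ]
    exact posDef_conj (Matrix.PosDef.diagonal hfpos) hV.1
  refine ⟨hPD, ?_⟩
  -- inverse formula
  have hinv : Θ⁻¹ = V * Matrix.diagonal (fun j => (f j)⁻¹) * Vᵀ := by
    apply Matrix.inv_eq_right_inv
    rw [hΘ]
    calc V * Matrix.diagonal f * Vᵀ * (V * Matrix.diagonal (fun j => (f j)⁻¹) * Vᵀ)
        = V * Matrix.diagonal f * (Vᵀ * V) * Matrix.diagonal (fun j => (f j)⁻¹) * Vᵀ := by
          simp only [Matrix.mul_assoc]
      _ = V * (Matrix.diagonal f * Matrix.diagonal (fun j => (f j)⁻¹)) * Vᵀ := by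
          rw [hV.2, Matrix.mul_one]; simp only [Matrix.mul_assoc]
      _ = 1 := by
          rw [Matrix.diagonal_mul_diagonal]
          have : (fun j => f j * (f j)⁻¹) = fun _ => (1:ℝ) := by
            funext j; exact mul_inv_cancel₀ (hfpos j).ne'
          rw [this, Matrix.diagonal_one, Matrix.mul_one, hV.1]
  -- key computation
  have hDdiag : Matrix.diagonal (fun j => D j j) = D := hD.diagonal_diag
  have key : n • Θ⁻¹ - ρ • Θ = n • S - ρ • B := by
    have hSB : n • S - ρ • B = n • (S - (ρ / n) • B) := by
      rw [smul_sub, smul_smul, mul_div_cancel₀ _ hn.ne']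
    have hsm : ∀ (a : ℝ) (M : Matrix (Fin p) (Fin p) ℝ),
        a • (V * M * Vᵀ) = V * (a • M) * Vᵀ := by
      intro a M
      rw [Matrix.mul_smul, Matrix.smul_mul]
    rw [hSB, hdecomp, hinv, hΘ, hsm, hsm, hsm]
    rw [← Matrix.sub_mul, ← Matrix.mul_sub]
    congr 2
    rw [← hDdiag]
    ext i k
    simp only [Matrix.sub_apply, Matrix.smul_apply, Matrix.diagonal_apply, smul_eq_mul]
    by_cases h : i = k
    · subst h
      simpa using hscalar i
    · simp [h]
  calc n • (Θ⁻¹ - S) - ρ • (Θ - B)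
      = (n • Θ⁻¹ - ρ • Θ) - (n • S - ρ • B) := by
        rw [smul_sub, smul_sub]; abel
    _ = 0 := by rw [key, sub_self]
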